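/- A De Morgan function lies in the clone ⟨DMA, □⟩ = ⟨∧, ∨, t, f, −, □⟩ if and only if it is harmonious and preserves B2, K3 and P3. Moreover, a De Morgan function lies in ⟨DLat, □, ◇⟩ = ⟨∧, ∨, t, f, □, ◇⟩ if and only if it is harmonious, positive, and preserves B2, K3 and P3. -/

import Mathlib

set_option autoImplicit false

/-- The four truth values of the Belnap–Dunn logic. -/
inductive DM4 : Type
  | t
  | f
  | n
  | b
deriving DecidableEq

namespace DM4

/-- De Morgan negation. -/
def neg : DM4 → DM4
  | t => f
  | f => t
  | n => n
  | b => b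

/-- Conflation. -/
def conf : DM4 → DM4
  | t => t
  | f => f
  | n => b
  | b => n

/-- Meet in the truth order. -/
def meet : DM4 → DM4 → DM4
  | f, _ => f
  | _, f => f
  | t, y => y
  | x, t => x
  | n, n => n
  | b, b => b
  | n, b => f
  | b, n => f

/-- Join in the truth order. -/
def join : DM4 → DM4 → DM4
  | t, _ => t
  | _, t => t
  | f, y => y
  | x, f => x
  | n, n => n
  | b, b => b
  | n, b => t
  | b, n => t

/-- Meet in the information order (⊗). -/
def imeet : DM4 → DM4 → DM4
  | n, _ => n
  | _, n => n
  | b, y => y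
  | x, b => x
  | t, t => t
  | f, f => f
  | t, f => n
  | f, t => n

/-- Join in the information order (⊕). -/
def ijoin : DM4 → DM4 → DM4
  | b, _ => b
  | _, b => b
  | n, y => y
  | x, n => x
  | t, t => t
  | f, f => f
  | t, f => b
  | f, t => b

/-- The truth order: least element `f`, greatest element `t`, with `n`, `b` incomparable. -/
def tle (x y : DM4) : Prop := x = y ∨ x = f ∨ y = t

/-- The information order: least element `n`, greatest element `b`, with `t`, `f` incomparable. -/
def ile (x y : DM4) : Prop := x = y ∨ x = n ∨ y = b

/-- □: maps t to t and everything else to f. -/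
def box : DM4 → DM4
  | t => t
  | _ => f

/-- ◇: maps f to f and everything else to t. -/
def diamond : DM4 → DM4
  | f => f
  | _ => t

/-- Δ: maps t, b to t and n, f to f. -/
def delta : DM4 → DM4
  | t => t
  | b => t
  | _ => f

/-- ∇: maps t, n to t and b, f to f. -/
def nabla : DM4 → DM4
  | t => t
  | n => t
  | _ => f

/-- id_{b↦n}: maps b to n and fixes t, f, n. -/
def idbn : DM4 → DM4
  | b => n
  | x => x

/-- id_{n↦b}: maps n to b and fixes t, f, b. -/
def idnb : DM4 → DM4
  | n => b
  | x => x

/-- id_{n↦t}: maps n to t and fixes t, f, b. -/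
def idnt : DM4 → DM4
  | n => t
  | x => x

/-- id_{b↦t}: maps b to t and fixes t, f, n. -/
def idbt : DM4 → DM4
  | b => t
  | x => x

/-- t_{n↦n}: maps n to n and everything else to t. -/
def tnn : DM4 → DM4
  | n => n
  | _ => t

/-- t_{b↦b}: maps b to b and everything else to t. -/
def tbb : DM4 → DM4
  | b => b
  | _ => t

/-- The binary function pbp²₁. -/
def pbp1 : DM4 → DM4 → DM4
  | t, t => t | t, f => f | t, n => f | t, b => b
  | f, t => t | f, f => f | f, n => f | f, b => b
  | n, t => t | n, f => f | n, n => n | n, b => b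
  | b, t => b | b, f => f | b, n => f | b, b => b

/-- The binary function pbp²₂. -/
def pbp2 : DM4 → DM4 → DM4
  | t, t => t | t, f => f | t, n => n | t, b => f
  | f, t => t | f, f => f | f, n => n | f, b => f
  | n, t => n | n, f => f | n, n => n | n, b => f
  | b, t => t | b, f => f | b, n => n | b, b => b

/-- The binary function mnh²₁. -/
def mnh1 : DM4 → DM4 → DM4
  | t, t => f | t, f => f | t, n => n | t, b => b
  | f, t => f | f, f => f | f, n => n | f, b => b
  | n, t => f | n, f => f | n, n => n | n, b => f
  | b, t => f | b, f => f | b, n => n | b, b => b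

/-- The binary function mnh²₂. -/
def mnh2 : DM4 → DM4 → DM4
  | t, t => f | t, f => f | t, n => n | t, b => b
  | f, t => f | f, f => f | f, n => n | f, b => b
  | n, t => f | n, f => f | n, n => n | n, b => b
  | b, t => f | b, f => f | b, n => f | b, b => b

/-- The binary function mhnp². -/
def mhnp2 : DM4 → DM4 → DM4
  | t, _ => t
  | f, _ => t
  | n, b => f
  | n, _ => n
  | b, n => f
  | b, _ => b

/-- The binary function mnp²₁. -/
def mnp1 : DM4 → DM4 → DM4
  | t, b => b
  | t, _ => t
  | f, b => b
  | f, _ => t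
  | n, b => f
  | n, _ => n
  | b, n => f
  | b, _ => b

/-- The binary function mnp²₂. -/
def mnp2 : DM4 → DM4 → DM4
  | t, _ => t
  | f, _ => t
  | n, _ => n
  | b, n => f
  | b, _ => b

/-- The binary function mnp²₃. -/
def mnp3 : DM4 → DM4 → DM4
  | t, n => n
  | t, _ => t
  | f, n => n
  | f, _ => t
  | n, b => f
  | n, _ => n
  | b, n => f
  | b, _ => b

/-- The binary function mnp²₄. -/
def mnp4 : DM4 → DM4 → DM4
  | t, _ => t
  | f, _ => t
  | n, b => f
  | n, _ => n
  | b, _ => b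

/-- The ternary function mhnp³. -/
def mhnp3 : DM4 → DM4 → DM4 → DM4
  | _, t, _ => f
  | _, f, _ => f
  | t, n, _ => n
  | f, n, _ => f
  | b, n, _ => f
  | n, n, b => f
  | n, n, _ => n
  | t, b, _ => b
  | f, b, _ => f
  | n, b, _ => f
  | b, b, n => f
  | b, b, _ => b

/-- The set of designated values. -/
def Des : Set DM4 := {t, b}

/-- Designatedness as a Boolean predicate. -/
def des : DM4 → Bool
  | t => true
  | b => true
  | _ => false

/-- The protoimplication →_{t-max}. -/
def tmax (x y : DM4) : DM4 :=
  match des x, des y with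
  | true, false => n
  | _, _ => t

/-- The protoimplication →_{i-max}. -/
def imax (x y : DM4) : DM4 :=
  match des x, des y with
  | true, false => f
  | _, _ => b

/-- The protoimplication ↔_{t-min}. -/
def tmin (x y : DM4) : DM4 := if x = y then b else f

/-- The protoimplication ↔_{i-min}. -/
def imin (x y : DM4) : DM4 := if x = y then t else n

/-- A binary operation is a protoimplication if it satisfies Reflexivity and Modus Ponens
with respect to the designated set {t, b}. -/
def IsProtoimplication (r : DM4 → DM4 → DM4) : Prop :=
  (∀ a : DM4, r a a ∈ Des) ∧ ∀ a c : DM4, a ∈ Des → r a c ∈ Des → c ∈ Des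

/-- `DMFun k` is the type of De Morgan functions of arity `k + 1` (arities are positive). -/
abbrev DMFun (k : ℕ) : Type := (Fin (k + 1) → DM4) → DM4

/-- Membership in the clone generated by the family of operations `S`
(`S k` is the set of generators of arity `k + 1`). -/
inductive InClone (S : ∀ k : ℕ, Set (DMFun k)) : ∀ k : ℕ, DMFun k → Prop
  | base {k : ℕ} {g : DMFun k} : g ∈ S k → InClone S k g
  | proj {k : ℕ} (i : Fin (k + 1)) : InClone S k (fun x => x i)
  | comp {k m : ℕ} {g : DMFun m} {h : Fin (m + 1) → DMFun k} :
      InClone S m g → (∀ i, InClone S k (h i)) →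
      InClone S k (fun x => g (fun i => h i x))

/-- A family of sets of De Morgan functions is a clone if it contains all projections
and is closed under composition. -/
structure IsClone (C : ∀ k : ℕ, Set (DMFun k)) : Prop where
  proj : ∀ (k : ℕ) (i : Fin (k + 1)), (fun x => x i) ∈ C k
  comp : ∀ (k m : ℕ) (g : DMFun m) (h : Fin (m + 1) → DMFun k),
      g ∈ C m → (∀ i, h i ∈ C k) → (fun x => g (fun i => h i x)) ∈ C k

/-- The generating family consisting of a single unary operation. -/
def op1 (g : DM4 → DM4) : ∀ k : ℕ, Set (DMFun k)
  | 0 => {fun x => g (x 0)}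
  | _ + 1 => ∅

/-- The generating family consisting of a single binary operation. -/
def op2 (g : DM4 → DM4 → DM4) : ∀ k : ℕ, Set (DMFun k)
  | 1 => {fun x => g (x 0) (x 1)}
  | _ => ∅

/-- The generating family consisting of a single ternary operation. -/
def op3 (g : DM4 → DM4 → DM4 → DM4) : ∀ k : ℕ, Set (DMFun k)
  | 2 => {fun x => g (x 0) (x 1) (x 2)}
  | _ => ∅

/-- Union of two families of operations. -/
def funion (S T : ∀ k : ℕ, Set (DMFun k)) : ∀ k : ℕ, Set (DMFun k) := fun k => S k ∪ T k

infixr:65 " ⊹ " => funion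

/-- The generators of DLat: ∧, ∨, t, f (constants as unary constant functions). -/
def DLatGen : ∀ k : ℕ, Set (DMFun k) :=
  op2 meet ⊹ op2 join ⊹ op1 (fun _ => t) ⊹ op1 (fun _ => f)

/-- The generators of DMA: ∧, ∨, t, f, −. -/
def DMAGen : ∀ k : ℕ, Set (DMFun k) := DLatGen ⊹ op1 neg

/-- The generators of BiLat: ∧, ∨, t, f, ⊗, ⊕, n, b. -/
def BiLatGen : ∀ k : ℕ, Set (DMFun k) :=
  DLatGen ⊹ op2 imeet ⊹ op2 ijoin ⊹ op1 (fun _ => n) ⊹ op1 (fun _ => b)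

/-- A De Morgan function is harmonious if it commutes with conflation. -/
def Harmonious {k : ℕ} (g : DMFun k) : Prop :=
  ∀ x : Fin (k + 1) → DM4, g (fun i => conf (x i)) = conf (g x)

/-- A De Morgan function is positive if it is monotone in the componentwise truth order. -/
def Positive {k : ℕ} (g : DMFun k) : Prop :=
  ∀ x y : Fin (k + 1) → DM4, (∀ i, tle (x i) (y i)) → tle (g x) (g y)

/-- A De Morgan function is persistent if it is monotone in the componentwise
information order. -/
def Persistent {k : ℕ} (g : DMFun k) : Prop :=
  ∀ x y : Fin (k + 1) → DM4, (∀ i, ile (x i) (y i)) → ile (g x) (g y)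

/-- A De Morgan function preserves a subset X of DM4 if it maps tuples from X into X. -/
def Preserves {k : ℕ} (g : DMFun k) (X : Set DM4) : Prop :=
  ∀ x : Fin (k + 1) → DM4, (∀ i, x i ∈ X) → g x ∈ X

def B2 : Set DM4 := {t, f}
def K3 : Set DM4 := {t, n, f}
def P3 : Set DM4 := {t, b, f}

/-- A unary operation as a De Morgan function. -/
def toF1 (g : DM4 → DM4) : DMFun 0 := fun x => g (x 0)

/-- A binary operation as a De Morgan function. -/
def toF2 (g : DM4 → DM4 → DM4) : DMFun 1 := fun x => g (x 0) (x 1)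

/-- A ternary operation as a De Morgan function. -/
def toF3 (g : DM4 → DM4 → DM4 → DM4) : DMFun 2 := fun x => g (x 0) (x 1) (x 2)

/-- The clone generated by a family of operations, as a family of sets. -/
def CloneOf (S : ∀ k : ℕ, Set (DMFun k)) : ∀ k : ℕ, Set (DMFun k) :=
  fun k => {g | InClone S k g}

/-- Inclusion of families of operations. -/
def CloneLE (C D : ∀ k : ℕ, Set (DMFun k)) : Prop := ∀ k : ℕ, C k ⊆ D k

-- ===== auxiliary development =====
instance : Fintype DM4 := ⟨⟨{t, f, n, b}, by decide⟩, fun x => by cases x <;> decide⟩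

/-- First Boolean coordinate: `c1 u = true` iff `u ∈ {t, n}`. -/
def c1 : DM4 → Bool
  | t => true
  | n => true
  | _ => false

lemma conf_conf (u : DM4) : conf (conf u) = u := by cases u <;> rfl

lemma eq_of_c1 (u v : DM4) (h1 : c1 u = c1 v) (h2 : c1 (conf u) = c1 (conf v)) : u = v := by
  revert h1 h2; revert u v; decide

lemma mem_B2_iff (u : DM4) : u ∈ B2 ↔ (u = t ∨ u = f) := by simp [B2]
lemma mem_K3_iff (u : DM4) : u ∈ K3 ↔ (u = t ∨ u = n ∨ u = f) := by simp [K3]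
lemma mem_P3_iff (u : DM4) : u ∈ P3 ↔ (u = t ∨ u = b ∨ u = f) := by simp [P3]

instance (x y : DM4) : Decidable (tle x y) := by unfold tle; infer_instance
instance (x y : DM4) : Decidable (ile x y) := by unfold ile; infer_instance
section Forward

lemma harm_of_inClone {S : ∀ k : ℕ, Set (DMFun k)}
    (hS : ∀ (k : ℕ) (g : DMFun k), g ∈ S k → Harmonious g) :
    ∀ {k : ℕ} {g : DMFun k}, InClone S k g → Harmonious g := by
  intro k g h
  induction h with
  | base hg => exact hS _ _ hg
  | proj i => intro x; rfl
  | @comp k m g h hg hh ihg ihh =>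
      intro x
      have h1 : (fun i => h i (fun j => conf (x j))) = fun i => conf (h i x) :=
        funext fun i => ihh i x
      show g (fun i => h i (fun j => conf (x j))) = conf (g (fun i => h i x))
      rw [h1]; exact ihg _

lemma pres_of_inClone {S : ∀ k : ℕ, Set (DMFun k)} {X : Set DM4}
    (hS : ∀ (k : ℕ) (g : DMFun k), g ∈ S k → Preserves g X) :
    ∀ {k : ℕ} {g : DMFun k}, InClone S k g → Preserves g X := by
  intro k g h
  induction h with
  | base hg => exact hS _ _ hg
  | proj i => intro x hx; exact hx i
  | @comp k m g h hg hh ihg ihh => intro x hx; exact ihg _ (fun i => ihh i x hx)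

lemma pos_of_inClone {S : ∀ k : ℕ, Set (DMFun k)}
    (hS : ∀ (k : ℕ) (g : DMFun k), g ∈ S k → Positive g) :
    ∀ {k : ℕ} {g : DMFun k}, InClone S k g → Positive g := by
  intro k g h
  induction h with
  | base hg => exact hS _ _ hg
  | proj i => intro x y hxy; exact hxy i
  | @comp k m g h hg hh ihg ihh => intro x y hxy; exact ihg _ _ (fun i => ihh i x y hxy)

lemma harm_S1 : ∀ (k : ℕ) (g : DMFun k), g ∈ (DMAGen ⊹ op1 box) k → Harmonious g := by
  intro k g hg
  rcases k with _ | _ | k <;>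
    simp only [funion, DMAGen, DLatGen, Set.mem_union, op1, op2,
      Set.mem_empty_iff_false, Set.mem_singleton_iff, false_or, or_false] at hg
  · rcases hg with ((h | h) | h) | h <;> subst h <;> intro x <;> revert x <;> decide
  · rcases hg with h | h <;> subst h <;> intro x <;> revert x <;> decide

lemma harm_S2 : ∀ (k : ℕ) (g : DMFun k),
    g ∈ (DLatGen ⊹ op1 box ⊹ op1 diamond) k → Harmonious g := by
  intro k g hg
  rcases k with _ | _ | k <;>
    simp only [funion, DLatGen, Set.mem_union, op1, op2,
      Set.mem_empty_iff_false, Set.mem_singleton_iff, false_or, or_false] at hg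
  · rcases hg with (h | h) | h | h <;> subst h <;> intro x <;> revert x <;> decide
  · rcases hg with h | h <;> subst h <;> intro x <;> revert x <;> decide

lemma pres_B2_S1 : ∀ (k : ℕ) (g : DMFun k), g ∈ (DMAGen ⊹ op1 box) k → Preserves g B2 := by
  intro k g hg
  rcases k with _ | _ | k <;>
    simp only [funion, DMAGen, DLatGen, Set.mem_union, op1, op2,
      Set.mem_empty_iff_false, Set.mem_singleton_iff, false_or, or_false] at hg
  · rcases hg with ((h | h) | h) | h <;> subst h <;>
      simp only [Preserves, mem_B2_iff] <;> decide
  · rcases hg with h | h <;> subst h <;> simp only [Preserves, mem_B2_iff] <;> decide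

lemma pres_K3_S1 : ∀ (k : ℕ) (g : DMFun k), g ∈ (DMAGen ⊹ op1 box) k → Preserves g K3 := by
  intro k g hg
  rcases k with _ | _ | k <;>
    simp only [funion, DMAGen, DLatGen, Set.mem_union, op1, op2,
      Set.mem_empty_iff_false, Set.mem_singleton_iff, false_or, or_false] at hg
  · rcases hg with ((h | h) | h) | h <;> subst h <;>
      simp only [Preserves, mem_K3_iff] <;> decide
  · rcases hg with h | h <;> subst h <;> simp only [Preserves, mem_K3_iff] <;> decide

lemma pres_P3_S1 : ∀ (k : ℕ) (g : DMFun k), g ∈ (DMAGen ⊹ op1 box) k → Preserves g P3 := by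
  intro k g hg
  rcases k with _ | _ | k <;>
    simp only [funion, DMAGen, DLatGen, Set.mem_union, op1, op2,
      Set.mem_empty_iff_false, Set.mem_singleton_iff, false_or, or_false] at hg
  · rcases hg with ((h | h) | h) | h <;> subst h <;>
      simp only [Preserves, mem_P3_iff] <;> decide
  · rcases hg with h | h <;> subst h <;> simp only [Preserves, mem_P3_iff] <;> decide

lemma pres_B2_S2 : ∀ (k : ℕ) (g : DMFun k),
    g ∈ (DLatGen ⊹ op1 box ⊹ op1 diamond) k → Preserves g B2 := by
  intro k g hg
  rcases k with _ | _ | k <;>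
    simp only [funion, DLatGen, Set.mem_union, op1, op2,
      Set.mem_empty_iff_false, Set.mem_singleton_iff, false_or, or_false] at hg
  · rcases hg with (h | h) | h | h <;> subst h <;>
      simp only [Preserves, mem_B2_iff] <;> decide
  · rcases hg with h | h <;> subst h <;> simp only [Preserves, mem_B2_iff] <;> decide

lemma pres_K3_S2 : ∀ (k : ℕ) (g : DMFun k),
    g ∈ (DLatGen ⊹ op1 box ⊹ op1 diamond) k → Preserves g K3 := by
  intro k g hg
  rcases k with _ | _ | k <;>
    simp only [funion, DLatGen, Set.mem_union, op1, op2,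
      Set.mem_empty_iff_false, Set.mem_singleton_iff, false_or, or_false] at hg
  · rcases hg with (h | h) | h | h <;> subst h <;>
      simp only [Preserves, mem_K3_iff] <;> decide
  · rcases hg with h | h <;> subst h <;> simp only [Preserves, mem_K3_iff] <;> decide

lemma pres_P3_S2 : ∀ (k : ℕ) (g : DMFun k),
    g ∈ (DLatGen ⊹ op1 box ⊹ op1 diamond) k → Preserves g P3 := by
  intro k g hg
  rcases k with _ | _ | k <;>
    simp only [funion, DLatGen, Set.mem_union, op1, op2,
      Set.mem_empty_iff_false, Set.mem_singleton_iff, false_or, or_false] at hg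
  · rcases hg with (h | h) | h | h <;> subst h <;>
      simp only [Preserves, mem_P3_iff] <;> decide
  · rcases hg with h | h <;> subst h <;> simp only [Preserves, mem_P3_iff] <;> decide

lemma pos_S2 : ∀ (k : ℕ) (g : DMFun k),
    g ∈ (DLatGen ⊹ op1 box ⊹ op1 diamond) k → Positive g := by
  intro k g hg
  rcases k with _ | _ | k <;>
    simp only [funion, DLatGen, Set.mem_union, op1, op2,
      Set.mem_empty_iff_false, Set.mem_singleton_iff, false_or, or_false] at hg
  · rcases hg with (h | h) | h | h <;> subst h <;> intro x y h <;> revert h <;>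
      revert x y <;> decide
  · rcases hg with h | h <;> subst h <;> intro x y h <;> revert h <;>
      revert x y <;> decide

end Forward
section Combinators

variable {S : ∀ k : ℕ, Set (DMFun k)} {k : ℕ}

lemma inClone_comp1 {op : DM4 → DM4} (hop : InClone S 0 (toF1 op))
    {g : DMFun k} (hg : InClone S k g) : InClone S k (fun x => op (g x)) :=
  InClone.comp (h := fun _ => g) hop (fun _ => hg)

lemma inClone_comp2 {op : DM4 → DM4 → DM4} (hop : InClone S 1 (toF2 op))
    {g1 g2 : DMFun k} (h1 : InClone S k g1) (h2 : InClone S k g2) :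
    InClone S k (fun x => op (g1 x) (g2 x)) :=
  InClone.comp (h := fun i => if i.val = 0 then g1 else g2) hop
    (fun i => by fin_cases i <;> simpa)

end Combinators
section Gens

variable {k : ℕ}

abbrev S1 : ∀ k : ℕ, Set (DMFun k) := DMAGen ⊹ op1 box
abbrev S2 : ∀ k : ℕ, Set (DMFun k) := DLatGen ⊹ op1 box ⊹ op1 diamond

lemma meet_mem_S1 : toF2 meet ∈ S1 1 := Or.inl (Or.inl (Or.inl rfl))
lemma join_mem_S1 : toF2 join ∈ S1 1 := Or.inl (Or.inl (Or.inr (Or.inl rfl)))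
lemma t_mem_S1 : toF1 (fun _ => t) ∈ S1 0 :=
  Or.inl (Or.inl (Or.inr (Or.inr (Or.inl rfl))))
lemma f_mem_S1 : toF1 (fun _ => f) ∈ S1 0 :=
  Or.inl (Or.inl (Or.inr (Or.inr (Or.inr rfl))))
lemma neg_mem_S1 : toF1 neg ∈ S1 0 := Or.inl (Or.inr rfl)
lemma box_mem_S1 : toF1 box ∈ S1 0 := Or.inr rfl

lemma meet_mem_S2 : toF2 meet ∈ S2 1 := Or.inl (Or.inl rfl)
lemma join_mem_S2 : toF2 join ∈ S2 1 := Or.inl (Or.inr (Or.inl rfl))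
lemma t_mem_S2 : toF1 (fun _ => t) ∈ S2 0 := Or.inl (Or.inr (Or.inr (Or.inl rfl)))
lemma f_mem_S2 : toF1 (fun _ => f) ∈ S2 0 := Or.inl (Or.inr (Or.inr (Or.inr rfl)))
lemma box_mem_S2 : toF1 box ∈ S2 0 := Or.inr (Or.inl rfl)
lemma diamond_mem_S2 : toF1 diamond ∈ S2 0 := Or.inr (Or.inr rfl)

lemma constT_S1 : InClone S1 k (fun _ => t) :=
  inClone_comp1 (InClone.base t_mem_S1) (InClone.proj 0)
lemma constF_S1 : InClone S1 k (fun _ => f) :=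
  inClone_comp1 (InClone.base f_mem_S1) (InClone.proj 0)
lemma constT_S2 : InClone S2 k (fun _ => t) :=
  inClone_comp1 (InClone.base t_mem_S2) (InClone.proj 0)
lemma constF_S2 : InClone S2 k (fun _ => f) :=
  inClone_comp1 (InClone.base f_mem_S2) (InClone.proj 0)

end Gens
section Lists

variable {k : ℕ}

/-- meet of a list of De Morgan functions (empty meet is the constant `t`). -/
def listMeetT : List (DMFun k) → DMFun k
  | [] => fun _ => t
  | g :: l => fun x => meet (g x) (listMeetT l x)

/-- join of a list of De Morgan functions (empty join is the constant `f`). -/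
def listJoinT : List (DMFun k) → DMFun k
  | [] => fun _ => f
  | g :: l => fun x => join (g x) (listJoinT l x)

lemma inClone_listMeetT {S : ∀ k : ℕ, Set (DMFun k)}
    (hmeet : toF2 meet ∈ S 1) (ht : InClone S k (fun _ => t))
    {l : List (DMFun k)} (hl : ∀ g ∈ l, InClone S k g) :
    InClone S k (listMeetT l) := by
  induction l with
  | nil => exact ht
  | cons g l ih =>
      exact inClone_comp2 (InClone.base hmeet) (hl g List.mem_cons_self)
        (ih fun g hg => hl g (List.mem_cons_of_mem _ hg))

lemma inClone_listJoinT {S : ∀ k : ℕ, Set (DMFun k)}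
    (hjoin : toF2 join ∈ S 1) (hf : InClone S k (fun _ => f))
    {l : List (DMFun k)} (hl : ∀ g ∈ l, InClone S k g) :
    InClone S k (listJoinT l) := by
  induction l with
  | nil => exact hf
  | cons g l ih =>
      exact inClone_comp2 (InClone.base hjoin) (hl g List.mem_cons_self)
        (ih fun g hg => hl g (List.mem_cons_of_mem _ hg))

lemma c1_meet (u v : DM4) : c1 (meet u v) = (c1 u && c1 v) := by revert u v; decide
lemma c1_join (u v : DM4) : c1 (join u v) = (c1 u || c1 v) := by revert u v; decide

lemma c1_listMeetT {l : List (DMFun k)} {x : Fin (k + 1) → DM4} :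
    c1 (listMeetT l x) = true ↔ ∀ g ∈ l, c1 (g x) = true := by
  induction l with
  | nil => simp [listMeetT]; rfl
  | cons g l ih =>
      simp only [listMeetT, c1_meet, Bool.and_eq_true, ih, List.mem_cons]
      constructor
      · rintro ⟨h1, h2⟩ g' (rfl | hg') ; exact h1; exact h2 _ hg'
      · intro h; exact ⟨h g (Or.inl rfl), fun g' hg' => h g' (Or.inr hg')⟩

lemma c1_listJoinT {l : List (DMFun k)} {x : Fin (k + 1) → DM4} :
    c1 (listJoinT l x) = true ↔ ∃ g ∈ l, c1 (g x) = true := by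
  induction l with
  | nil => simp [listJoinT]; rfl
  | cons g l ih =>
      simp only [listJoinT, c1_join, Bool.or_eq_true, ih, List.mem_cons]
      constructor
      · rintro (h1 | ⟨g', hg', h2⟩)
        · exact ⟨g, Or.inl rfl, h1⟩
        · exact ⟨g', Or.inr hg', h2⟩
      · rintro ⟨g', (rfl | hg'), h2⟩
        · exact Or.inl h2
        · exact Or.inr ⟨g', hg', h2⟩

end Lists
section Clone1

variable {k : ℕ}

/-- unary literal terms -/
def lit1 : DM4 → DM4 → DM4
  | t => box
  | f => fun u => box (neg u)
  | n => fun u => meet u (neg u)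
  | b => fun u => neg (join (box u) (box (neg u)))

/-- Boolean spec of the first coordinate of `lit1` -/
def lit1S : DM4 → DM4 → Bool
  | t, u => u == t
  | f, u => u == f
  | n, u => u == n
  | b, u => (u == n || u == b)

lemma c1_lit1 (v u : DM4) : c1 (lit1 v u) = lit1S v u := by revert v u; decide

lemma inClone_lit1 (v : DM4) (i : Fin (k + 1)) :
    InClone S1 k (fun x => lit1 v (x i)) := by
  cases v with
  | t =>
      show InClone S1 k (fun x => box (x i))
      exact inClone_comp1 (InClone.base box_mem_S1) (InClone.proj i)
  | f =>
      show InClone S1 k (fun x => box (neg (x i)))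
      exact inClone_comp1 (InClone.base box_mem_S1)
        (inClone_comp1 (InClone.base neg_mem_S1) (InClone.proj i))
  | n =>
      show InClone S1 k (fun x => meet (x i) (neg (x i)))
      exact inClone_comp2 (InClone.base meet_mem_S1) (InClone.proj i)
        (inClone_comp1 (InClone.base neg_mem_S1) (InClone.proj i))
  | b =>
      show InClone S1 k (fun x => neg (join (box (x i)) (box (neg (x i)))))
      exact inClone_comp1 (InClone.base neg_mem_S1)
        (inClone_comp2 (InClone.base join_mem_S1)
          (inClone_comp1 (InClone.base box_mem_S1) (InClone.proj i))
          (inClone_comp1 (InClone.base box_mem_S1)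
            (inClone_comp1 (InClone.base neg_mem_S1) (InClone.proj i))))

/-- conjunction of unary literals describing the tuple `a` -/
def litsT (a : Fin (k + 1) → DM4) : DMFun k :=
  listMeetT ((List.finRange (k + 1)).map (fun i => fun x => lit1 (a i) (x i)))

lemma inClone_litsT (a : Fin (k + 1) → DM4) : InClone S1 k (litsT a) :=
  inClone_listMeetT meet_mem_S1 constT_S1 (by
    rintro g hg
    obtain ⟨i, -, rfl⟩ := List.mem_map.mp hg
    exact inClone_lit1 _ i)

lemma c1_litsT {a x : Fin (k + 1) → DM4} :
    c1 (litsT a x) = true ↔ ∀ i, lit1S (a i) (x i) = true := by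
  rw [litsT, c1_listMeetT]
  constructor
  · intro h i
    have := h _ (List.mem_map.mpr ⟨i, List.mem_finRange i, rfl⟩)
    rwa [c1_lit1] at this
  · rintro h g hg
    obtain ⟨i, -, rfl⟩ := List.mem_map.mp hg
    rw [c1_lit1]; exact h i

/-- the list of positions where `a` takes value `b` -/
def Blist (a : Fin (k + 1) → DM4) : List (Fin (k + 1)) :=
  (List.finRange (k + 1)).filter (fun i => a i == b)

lemma mem_Blist {a : Fin (k + 1) → DM4} {i : Fin (k + 1)} :
    i ∈ Blist a ↔ a i = b := by
  simp [Blist, List.mem_filter]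

/-- the conjunction of the terms `□(x j ∨ x i)` over `b`-positions `i` of `a` -/
def bpairT (j : Fin (k + 1)) (a : Fin (k + 1) → DM4) : DMFun k :=
  listMeetT ((Blist a).map (fun i => fun x => box (join (x j) (x i))))

lemma inClone_bpairT (j : Fin (k + 1)) (a : Fin (k + 1) → DM4) :
    InClone S1 k (bpairT j a) :=
  inClone_listMeetT meet_mem_S1 constT_S1 (by
    rintro g hg
    obtain ⟨i, -, rfl⟩ := List.mem_map.mp hg
    exact inClone_comp1 (InClone.base box_mem_S1)
      (inClone_comp2 (InClone.base join_mem_S1) (InClone.proj j) (InClone.proj i)))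

lemma c1_bpairT {j : Fin (k + 1)} {a x : Fin (k + 1) → DM4} :
    c1 (bpairT j a x) = true ↔ ∀ i, a i = b → c1 (box (join (x j) (x i))) = true := by
  rw [bpairT, c1_listMeetT]
  constructor
  · intro h i hi
    exact h _ (List.mem_map.mpr ⟨i, mem_Blist.mpr hi, rfl⟩)
  · rintro h g hg
    obtain ⟨i, hi, rfl⟩ := List.mem_map.mp hg
    exact h i (mem_Blist.mp hi)

/-- the main branch of the point term (some coordinate of `a` equals `n`) -/
def T1core (j : Fin (k + 1)) (a : Fin (k + 1) → DM4) : DMFun k :=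
  fun x => meet (litsT a x) (bpairT j a x)

/-- the point term of the tuple `a` for the clone ⟨DMA, □⟩ -/
noncomputable def T1 (a : Fin (k + 1) → DM4) : DMFun k :=
  if h : ∃ j, a j = n then T1core h.choose a
  else if ∃ i, a i = b then fun x => neg (box (neg (litsT (fun i => conf (a i)) x)))
  else litsT a

lemma inClone_T1 (a : Fin (k + 1) → DM4) : InClone S1 k (T1 a) := by
  rw [T1]
  split_ifs with h1 h2
  · exact inClone_comp2 (InClone.base meet_mem_S1) (inClone_litsT a)
      (inClone_bpairT _ a)
  · exact inClone_comp1 (InClone.base neg_mem_S1)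
      (inClone_comp1 (InClone.base box_mem_S1)
        (inClone_comp1 (InClone.base neg_mem_S1) (inClone_litsT _)))
  · exact inClone_litsT a

end Clone1
section Clone1Main

variable {k : ℕ}

lemma l_self : ∀ u : DM4, lit1S u u = true := by decide
lemma l_exact : ∀ v u : DM4, v ≠ b → lit1S v u = true → u = v := by decide
lemma l_nb : ∀ v : DM4, lit1S b v = true → c1 (box (join n v)) = true → v = b := by decide
lemma l_bj : c1 (box (join n b)) = true := by decide
lemma conf_inj : ∀ u v : DM4, conf u = conf v → u = v := by decide
lemma conf_ne_b : ∀ u : DM4, u ≠ n → conf u ≠ b := by decide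
lemma c1_dia1 : ∀ u : DM4, c1 (neg (box (neg u))) = (c1 u || c1 (conf u)) := by decide
lemma n_ne_b : (n : DM4) ≠ b := by decide
lemma ne_n_mem_P3 : ∀ u : DM4, u ≠ n → u ∈ P3 := by
  intro u hu; rw [mem_P3_iff]; revert hu; revert u; decide
lemma P3_t : ∀ u : DM4, u ∈ P3 → c1 u = true → u = t := by
  intro u hu; rw [mem_P3_iff] at hu; revert hu; revert u; decide

lemma T1_self (x : Fin (k + 1) → DM4) : c1 (T1 x x) = true := by
  rw [T1]
  split_ifs with h1 h2
  · show c1 (meet (litsT x x) (bpairT _ x x)) = true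
    rw [c1_meet, Bool.and_eq_true]
    refine ⟨c1_litsT.mpr (fun i => l_self _), c1_bpairT.mpr (fun i hi => ?_)⟩
    rw [h1.choose_spec, hi]; exact l_bj
  · rw [c1_dia1, Bool.or_eq_true]
    right
    have hh := harm_of_inClone harm_S1 (inClone_litsT (fun i => conf (x i))) x
    rw [← hh]
    exact c1_litsT.mpr (fun i => l_self _)
  · exact c1_litsT.mpr (fun i => l_self _)

lemma T1_sound {g : DMFun k} (Hg : Harmonious g) (HP3 : Preserves g P3)
    {a x : Fin (k + 1) → DM4} (ha : c1 (g a) = true) (hT : c1 (T1 a x) = true) :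
    c1 (g x) = true := by
  rw [T1] at hT
  split_ifs at hT with h1 h2
  · simp only [T1core] at hT
    rw [c1_meet, Bool.and_eq_true] at hT
    obtain ⟨hE, hB⟩ := hT
    have hE' := c1_litsT.mp hE
    have hj : x h1.choose = n := by
      have h0 := hE' h1.choose
      rw [h1.choose_spec] at h0
      exact l_exact _ _ n_ne_b h0
    have hx : x = a := by
      funext i
      by_cases hib : a i = b
      · have h1i := hE' i
        rw [hib] at h1i
        have h2i := c1_bpairT.mp hB i hib
        rw [hj] at h2i
        rw [hib]
        exact l_nb _ h1i h2i
      · exact l_exact _ _ hib (hE' i)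
    rw [hx]; exact ha
  · rw [c1_dia1, Bool.or_eq_true] at hT
    push_neg at h1
    rcases hT with hA | hB
    · have hx : x = fun i => conf (a i) :=
        funext fun i => l_exact _ _ (conf_ne_b _ (h1 i)) (c1_litsT.mp hA i)
      have hgat : g a = t := P3_t _ (HP3 a (fun i => ne_n_mem_P3 _ (h1 i))) ha
      rw [hx, Hg a, hgat]; rfl
    · have hh := harm_of_inClone harm_S1 (inClone_litsT (fun i => conf (a i))) x
      rw [← hh] at hB
      have hx : x = a := funext fun i =>
        conf_inj _ _ (l_exact _ _ (conf_ne_b _ (h1 i)) (c1_litsT.mp hB i))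
      rw [hx]; exact ha
  · push_neg at h2
    have hx : x = a := funext fun i => l_exact _ _ (h2 i) (c1_litsT.mp hT i)
    rw [hx]; exact ha

lemma backward1 {g : DMFun k} (Hg : Harmonious g) (HP3 : Preserves g P3) :
    InClone S1 k g := by
  classical
  set L := (((Finset.univ : Finset (Fin (k + 1) → DM4)).toList.filter
    (fun a => c1 (g a))).map T1) with hL
  have hΦ : InClone S1 k (listJoinT L) :=
    inClone_listJoinT join_mem_S1 constF_S1 (by
      rintro h hh
      obtain ⟨a, -, rfl⟩ := List.mem_map.mp hh
      exact inClone_T1 a)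
  have hc1 : ∀ x, c1 (listJoinT L x) = c1 (g x) := by
    intro x
    by_cases hx : c1 (g x) = true
    · rw [hx, c1_listJoinT]
      exact ⟨T1 x, List.mem_map.mpr ⟨x, List.mem_filter.mpr
        ⟨Finset.mem_toList.mpr (Finset.mem_univ x), hx⟩, rfl⟩, T1_self x⟩
    · rw [Bool.not_eq_true] at hx
      rw [hx]
      refine Bool.eq_false_iff.mpr (fun hc => ?_)
      obtain ⟨h', hh', hch⟩ := c1_listJoinT.mp hc
      obtain ⟨a, hamem, rfl⟩ := List.mem_map.mp hh'
      have hag := (List.mem_filter.mp hamem).2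
      have hbad := T1_sound Hg HP3 hag hch
      rw [hx] at hbad
      exact Bool.noConfusion hbad
  have hfun : listJoinT L = g := by
    funext x
    have hΦharm := harm_of_inClone harm_S1 hΦ
    refine eq_of_c1 _ _ (hc1 x) ?_
    rw [← hΦharm x, ← Hg x]
    exact hc1 _
  rw [← hfun]; exact hΦ

end Clone1Main
section Clone2

variable {k : ℕ}

/-- unary literal terms for the positive clone -/
def lit2 : DM4 → DM4 → DM4
  | t => box
  | f => fun _ => t
  | n => fun u => u
  | b => diamond

/-- Boolean spec of the first coordinate of `lit2` -/
def lit2S : DM4 → DM4 → Bool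
  | t, u => u == t
  | f, _ => true
  | n, u => c1 u
  | b, u => u != f

lemma c1_lit2 (v u : DM4) : c1 (lit2 v u) = lit2S v u := by revert v u; decide

lemma inClone_lit2 (v : DM4) (i : Fin (k + 1)) :
    InClone S2 k (fun x => lit2 v (x i)) := by
  cases v with
  | t =>
      show InClone S2 k (fun x => box (x i))
      exact inClone_comp1 (InClone.base box_mem_S2) (InClone.proj i)
  | f =>
      show InClone S2 k (fun _ => t)
      exact constT_S2
  | n =>
      show InClone S2 k (fun x => x i)
      exact InClone.proj i
  | b =>
      show InClone S2 k (fun x => diamond (x i))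
      exact inClone_comp1 (InClone.base diamond_mem_S2) (InClone.proj i)

/-- conjunction of positive unary literals describing the tuple `a` -/
def lits2T (a : Fin (k + 1) → DM4) : DMFun k :=
  listMeetT ((List.finRange (k + 1)).map (fun i => fun x => lit2 (a i) (x i)))

lemma inClone_lits2T (a : Fin (k + 1) → DM4) : InClone S2 k (lits2T a) :=
  inClone_listMeetT meet_mem_S2 constT_S2 (by
    rintro g hg
    obtain ⟨i, -, rfl⟩ := List.mem_map.mp hg
    exact inClone_lit2 _ i)

lemma c1_lits2T {a x : Fin (k + 1) → DM4} :
    c1 (lits2T a x) = true ↔ ∀ i, lit2S (a i) (x i) = true := by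
  rw [lits2T, c1_listMeetT]
  constructor
  · intro h i
    have := h _ (List.mem_map.mpr ⟨i, List.mem_finRange i, rfl⟩)
    rwa [c1_lit2] at this
  · rintro h g hg
    obtain ⟨i, -, rfl⟩ := List.mem_map.mp hg
    rw [c1_lit2]; exact h i

/-- the list of positions where `a` takes value `n` -/
def Nlist (a : Fin (k + 1) → DM4) : List (Fin (k + 1)) :=
  (List.finRange (k + 1)).filter (fun i => a i == n)

lemma mem_Nlist {a : Fin (k + 1) → DM4} {i : Fin (k + 1)} :
    i ∈ Nlist a ↔ a i = n := by
  simp [Nlist, List.mem_filter]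

lemma inClone_bpairT_S2 (j : Fin (k + 1)) (a : Fin (k + 1) → DM4) :
    InClone S2 k (bpairT j a) :=
  inClone_listMeetT meet_mem_S2 constT_S2 (by
    rintro g hg
    obtain ⟨i, -, rfl⟩ := List.mem_map.mp hg
    exact inClone_comp1 (InClone.base box_mem_S2)
      (inClone_comp2 (InClone.base join_mem_S2) (InClone.proj j) (InClone.proj i)))

/-- the conjunction of `□(x j ∨ x i)` over `n`-positions `j` and `b`-positions `i` -/
def pairs2T (a : Fin (k + 1) → DM4) : DMFun k :=
  listMeetT ((Nlist a).map (fun j => bpairT j a))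

lemma inClone_pairs2T (a : Fin (k + 1) → DM4) : InClone S2 k (pairs2T a) :=
  inClone_listMeetT meet_mem_S2 constT_S2 (by
    rintro g hg
    obtain ⟨j, -, rfl⟩ := List.mem_map.mp hg
    exact inClone_bpairT_S2 j a)

lemma c1_pairs2T {a x : Fin (k + 1) → DM4} :
    c1 (pairs2T a x) = true ↔
      ∀ j, a j = n → ∀ i, a i = b → c1 (box (join (x j) (x i))) = true := by
  rw [pairs2T, c1_listMeetT]
  constructor
  · intro h j hj
    exact c1_bpairT.mp (h _ (List.mem_map.mpr ⟨j, mem_Nlist.mpr hj, rfl⟩))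
  · rintro h g hg
    obtain ⟨j, hj, rfl⟩ := List.mem_map.mp hg
    exact c1_bpairT.mpr (h j (mem_Nlist.mp hj))

/-- the meet of the variables at the `b`-positions of `a` -/
def bmeetT (a : Fin (k + 1) → DM4) : DMFun k :=
  listMeetT ((Blist a).map (fun i => fun x => x i))

lemma inClone_bmeetT (a : Fin (k + 1) → DM4) : InClone S2 k (bmeetT a) :=
  inClone_listMeetT meet_mem_S2 constT_S2 (by
    rintro g hg
    obtain ⟨i, -, rfl⟩ := List.mem_map.mp hg
    exact InClone.proj i)

lemma c1_bmeetT {a x : Fin (k + 1) → DM4} :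
    c1 (bmeetT a x) = true ↔ ∀ i, a i = b → c1 (x i) = true := by
  rw [bmeetT, c1_listMeetT]
  constructor
  · intro h i hi
    exact h _ (List.mem_map.mpr ⟨i, mem_Blist.mpr hi, rfl⟩)
  · rintro h g hg
    obtain ⟨i, hi, rfl⟩ := List.mem_map.mp hg
    exact h i (mem_Blist.mp hi)

/-- the point term of the tuple `a` for the clone ⟨DLat, □, ◇⟩ -/
def T2 (a : Fin (k + 1) → DM4) : DMFun k :=
  fun x => meet (lits2T a x) (meet (pairs2T a x) (diamond (bmeetT a x)))

lemma inClone_T2 (a : Fin (k + 1) → DM4) : InClone S2 k (T2 a) :=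
  inClone_comp2 (InClone.base meet_mem_S2) (inClone_lits2T a)
    (inClone_comp2 (InClone.base meet_mem_S2) (inClone_pairs2T a)
      (inClone_comp1 (InClone.base diamond_mem_S2) (inClone_bmeetT a)))

end Clone2
section Clone2Main

variable {k : ℕ}

lemma l2_self : ∀ u : DM4, lit2S u u = true := by decide
lemma l2_tle : ∀ v u : DM4, lit2S v u = true → (v = b → c1 (conf u) = true) → tle v u := by
  decide
lemma l2_nb_pair : ∀ u v : DM4, c1 u = true → c1 (conf v) = false →
    c1 (box (join u v)) = true → u = t := by decide
lemma c1_tle_mono : ∀ u v : DM4, tle u v → c1 u = true → c1 v = true := by decide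
lemma tle_n : ∀ u : DM4, c1 u = true → tle n u := by decide
lemma tle_refl : ∀ u : DM4, tle u u := by decide
lemma tle_nt : tle n t := by decide
lemma tle_t_of_eq : ∀ u : DM4, u = t → tle t u := by decide
lemma c1_dia : ∀ u : DM4, c1 (diamond u) = (c1 u || c1 (conf u)) := by decide
lemma l2_tfix : ∀ u : DM4, lit2S t u = true → u = t := by decide

lemma pos_transfer {g : DMFun k} (Hpos : Positive g) {w x : Fin (k + 1) → DM4}
    (hw : ∀ i, tle (w i) (x i)) (hcw : c1 (g w) = true) : c1 (g x) = true :=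
  c1_tle_mono _ _ (Hpos w x hw) hcw

lemma T2_self (x : Fin (k + 1) → DM4) : c1 (T2 x x) = true := by
  show c1 (meet _ (meet _ _)) = true
  rw [c1_meet, c1_meet, Bool.and_eq_true, Bool.and_eq_true]
  refine ⟨c1_lits2T.mpr (fun i => l2_self _), ?_, ?_⟩
  · refine c1_pairs2T.mpr (fun j hj i hi => ?_)
    rw [hj, hi]; exact l_bj
  · rw [c1_dia, Bool.or_eq_true]
    right
    have hh := harm_of_inClone harm_S2 (inClone_bmeetT x) x
    rw [← hh]
    refine c1_bmeetT.mpr (fun i hi => ?_)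
    show c1 (conf (x i)) = true
    rw [hi]; rfl

lemma T2_sound {g : DMFun k} (Hg : Harmonious g) (Hpos : Positive g)
    (HP3 : Preserves g P3) {a x : Fin (k + 1) → DM4}
    (ha : c1 (g a) = true) (hT : c1 (T2 a x) = true) : c1 (g x) = true := by
  rw [T2, c1_meet, c1_meet, Bool.and_eq_true, Bool.and_eq_true] at hT
  obtain ⟨hE, hP, hG⟩ := hT
  have hE' := c1_lits2T.mp hE
  by_cases hQ : ∀ i, a i = b → c1 (conf (x i)) = true
  · exact pos_transfer Hpos (fun i => l2_tle _ _ (hE' i) (hQ i)) ha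
  · push_neg at hQ
    obtain ⟨i0, hi0b, hQ1⟩ := hQ
    have hQ0 : c1 (conf (x i0)) = false := Bool.eq_false_iff.mpr hQ1
    have hh := harm_of_inClone harm_S2 (inClone_bmeetT a) x
    rw [c1_dia, Bool.or_eq_true, ← hh] at hG
    have hGA : ∀ i, a i = b → c1 (x i) = true := by
      rcases hG with h | h
      · exact c1_bmeetT.mp h
      · have := c1_bmeetT.mp h i0 hi0b
        rw [hQ0] at this
        exact Bool.noConfusion this
    have hN : ∀ j, a j = n → x j = t := by
      intro j hj
      have h1 := hE' j
      rw [hj] at h1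
      exact l2_nb_pair _ _ h1 hQ0 (c1_pairs2T.mp hP j hj i0 hi0b)
    set cc : Fin (k + 1) → DM4 := fun i => if a i = n then t else a i with hcc
    have hcc1 : c1 (g cc) = true := by
      refine pos_transfer Hpos (w := a) (fun i => ?_) ha
      by_cases hi : a i = n
      · simp only [hcc, if_pos hi, hi]; exact tle_nt
      · simp only [hcc, if_neg hi]; exact tle_refl _
    have hccne : ∀ i, cc i ≠ n := by
      intro i
      by_cases hi : a i = n
      · simp only [hcc, if_pos hi]; decide
      · simp only [hcc, if_neg hi]; exact hi
    have hgcc : g cc = t := P3_t _ (HP3 cc (fun i => ne_n_mem_P3 _ (hccne i))) hcc1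
    have hw : c1 (g (fun i => conf (cc i))) = true := by
      rw [Hg cc, hgcc]; rfl
    refine pos_transfer Hpos (w := fun i => conf (cc i)) (fun i => ?_) hw
    by_cases hi : a i = n
    · simp only [hcc, if_pos hi]
      show tle (conf t) (x i)
      rw [hN i hi]; exact tle_refl _
    · simp only [hcc, if_neg hi]
      have h1 := hE' i
      revert h1
      rcases h2 : a i with _ | _ | _ | _
      · intro h1
        show tle (conf t) (x i)
        rw [l2_tfix _ h1]; exact tle_refl _
      · intro _
        show tle (conf f) (x i)
        exact Or.inr (Or.inl rfl)
      · exact absurd h2 hi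
      · intro _
        show tle (conf b) (x i)
        exact tle_n _ (hGA i h2)
  
lemma backward2 {g : DMFun k} (Hg : Harmonious g) (Hpos : Positive g)
    (HP3 : Preserves g P3) : InClone S2 k g := by
  classical
  set L := (((Finset.univ : Finset (Fin (k + 1) → DM4)).toList.filter
    (fun a => c1 (g a))).map T2) with hL
  have hΦ : InClone S2 k (listJoinT L) :=
    inClone_listJoinT join_mem_S2 constF_S2 (by
      rintro h hh
      obtain ⟨a, -, rfl⟩ := List.mem_map.mp hh
      exact inClone_T2 a)
  have hc1 : ∀ x, c1 (listJoinT L x) = c1 (g x) := by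
    intro x
    by_cases hx : c1 (g x) = true
    · rw [hx, c1_listJoinT]
      exact ⟨T2 x, List.mem_map.mpr ⟨x, List.mem_filter.mpr
        ⟨Finset.mem_toList.mpr (Finset.mem_univ x), hx⟩, rfl⟩, T2_self x⟩
    · rw [Bool.not_eq_true] at hx
      rw [hx]
      refine Bool.eq_false_iff.mpr (fun hc => ?_)
      obtain ⟨h', hh', hch⟩ := c1_listJoinT.mp hc
      obtain ⟨a, hamem, rfl⟩ := List.mem_map.mp hh'
      have hag := (List.mem_filter.mp hamem).2
      have hbad := T2_sound Hg Hpos HP3 hag hch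
      rw [hx] at hbad
      exact Bool.noConfusion hbad
  have hfun : listJoinT L = g := by
    funext x
    have hΦharm := harm_of_inClone harm_S2 hΦ
    refine eq_of_c1 _ _ (hc1 x) ?_
    rw [← hΦharm x, ← Hg x]
    exact hc1 _
  rw [← hfun]; exact hΦ

end Clone2Main

/-- A De Morgan function lies in ⟨DMA, □⟩ iff it is harmonious and
preserves B2, K3, P3; and it lies in ⟨DLat, □, ◇⟩ iff it is harmonious, positive,
and preserves B2, K3, P3. -/
theorem box_diamond_clone_characterization (k : ℕ) (g : DMFun k) :
    (InClone (DMAGen ⊹ op1 box) k g ↔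
      Harmonious g ∧ Preserves g B2 ∧ Preserves g K3 ∧ Preserves g P3) ∧
    (InClone (DLatGen ⊹ op1 box ⊹ op1 diamond) k g ↔
      Harmonious g ∧ Positive g ∧ Preserves g B2 ∧ Preserves g K3 ∧ Preserves g P3) := by
  constructor
  · constructor
    · intro h
      exact ⟨harm_of_inClone harm_S1 h, pres_of_inClone pres_B2_S1 h,
        pres_of_inClone pres_K3_S1 h, pres_of_inClone pres_P3_S1 h⟩
    · rintro ⟨h1, -, -, h4⟩
      exact backward1 h1 h4
  · constructor
    · intro h
      exact ⟨harm_of_inClone harm_S2 h, pos_of_inClone pos_S2 h,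
        pres_of_inClone pres_B2_S2 h, pres_of_inClone pres_K3_S2 h,
        pres_of_inClone pres_P3_S2 h⟩
    · rintro ⟨h1, h2, -, -, h5⟩
      exact backward2 h1 h2 h5

end DM4
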